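/- Let α, β, τ be natural numbers with τ ≥ 1, let p = (α+1)/(α+β+2), p_W = (α+2)/(α+β+3), p_L = (α+1)/(α+β+3) be rationals, and let q be a rational with p_W > q > p_L. Then p * (1 + p_W * (τ-1)) + (1-p) * (q * (τ-1)) ≥ p * τ, with strict inequality when τ ≥ 2. -/
import Mathlib

theorem stmt_1 (α β τ : ℕ) (hτ : 1 ≤ τ) (q : ℚ)
    (h1 : ((α:ℚ)+1)/((α:ℚ)+β+3) < q) (h2 : q < ((α:ℚ)+2)/((α:ℚ)+β+3)) :
    (((α:ℚ)+1)/((α:ℚ)+β+2)) * (1 + (((α:ℚ)+2)/((α:ℚ)+β+3)) * ((τ:ℚ)-1))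
        + (1 - ((α:ℚ)+1)/((α:ℚ)+β+2)) * (q * ((τ:ℚ)-1))
      ≥ (((α:ℚ)+1)/((α:ℚ)+β+2)) * (τ:ℚ)
    ∧ (2 ≤ τ →
      (((α:ℚ)+1)/((α:ℚ)+β+2)) * (1 + (((α:ℚ)+2)/((α:ℚ)+β+3)) * ((τ:ℚ)-1))
        + (1 - ((α:ℚ)+1)/((α:ℚ)+β+2)) * (q * ((τ:ℚ)-1))
      > (((α:ℚ)+1)/((α:ℚ)+β+2)) * (τ:ℚ)) := by
  have ha : (0:ℚ) ≤ (α:ℚ) := Nat.cast_nonneg α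
  have hb : (0:ℚ) ≤ (β:ℚ) := Nat.cast_nonneg β
  set p : ℚ := ((α:ℚ)+1)/((α:ℚ)+β+2) with hp
  set pW : ℚ := ((α:ℚ)+2)/((α:ℚ)+β+3) with hpW
  set pL : ℚ := ((α:ℚ)+1)/((α:ℚ)+β+3) with hpL
  have hd2 : (0:ℚ) < (α:ℚ)+β+2 := by linarith
  have hd3 : (0:ℚ) < (α:ℚ)+β+3 := by linarith
  have hmart : p * pW + (1 - p) * pL = p := by
    rw [hp, hpW, hpL]; field_simp; ring
  have hp1 : p < 1 := by
    rw [hp, div_lt_one hd2]; linarith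
  have hkey : 0 < p * pW + (1 - p) * q - p := by
    have : (1 - p) * pL < (1 - p) * q :=
      mul_lt_mul_of_pos_left h1 (by linarith)
    linarith [hmart]
  have heq : ∀ t : ℚ, p * (1 + pW * (t-1)) + (1 - p) * (q * (t-1)) - p * t
      = (t - 1) * (p * pW + (1 - p) * q - p) := by
    intro t; ring
  constructor
  · have ht : (1:ℚ) ≤ (τ:ℚ) := by exact_mod_cast hτ
    nlinarith [heq (τ:ℚ)]
  · intro h2τ
    have ht : (2:ℚ) ≤ (τ:ℚ) := by exact_mod_cast h2τ
    nlinarith [heq (τ:ℚ)]
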